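/- Consider two agents at positions p, q ∈ ℤ² in an otherwise empty gridworld (all other cells floor). Suppose agent p has an admissible dance supported on a 2×2 subgrid D containing p (the other three cells of D are empty), and agent q has an admissible Move q→q'. Then the dance and the move fail to have disjoint supports while each individual Move within the dance has support disjoint from {q,q'} if and only if q' is the cell of D diagonally opposite to p; in that case p and q differ by a knight move (their coordinate differences are ±1 and ±2 in some order). -/
import Mathlib


/-- A cell of the gridworld. -/
abbrev Cell : Type := ℤ × ℤ

/-- Two cells are orthogonally adjacent if their `L¹`-distance is 1. -/
def Adj (c c' : Cell) : Prop :=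
  (c.1 - c'.1).natAbs + (c.2 - c'.2).natAbs = 1

/-- The `2 × 2` subgrid with bottom-left corner `a`. -/
def square (a : Cell) : Finset Cell :=
  {(a.1, a.2), (a.1 + 1, a.2), (a.1, a.2 + 1), (a.1 + 1, a.2 + 1)}

/-- The cell of the `2 × 2` subgrid `square a` diagonally opposite to `p`
(the unique cell of the subgrid at `L¹`-distance 2 from `p`). -/
def oppCell (a p : Cell) : Cell := (2 * a.1 + 1 - p.1, 2 * a.2 + 1 - p.2)

/-- Two agents' positions differ by a knight move: coordinate differences are
`±1` and `±2` in some order. -/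
def KnightRel (p q : Cell) : Prop :=
  ((p.1 - q.1).natAbs = 1 ∧ (p.2 - q.2).natAbs = 2) ∨
  ((p.1 - q.1).natAbs = 2 ∧ (p.2 - q.2).natAbs = 1)

private lemma opp_mem {a p : Cell} (hp : p ∈ square a) : oppCell a p ∈ square a := by
  obtain ⟨a1, a2⟩ := a; obtain ⟨p1, p2⟩ := p
  simp only [square, oppCell, Finset.mem_insert, Finset.mem_singleton, Prod.mk.injEq] at hp ⊢
  omega

private lemma not_adj_opp {a p : Cell} (hp : p ∈ square a) : ¬ Adj p (oppCell a p) := by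
  obtain ⟨a1, a2⟩ := a; obtain ⟨p1, p2⟩ := p
  simp only [square, Finset.mem_insert, Finset.mem_singleton, Prod.mk.injEq] at hp
  simp only [Adj, oppCell]
  omega

private lemma eq_opp {a p d : Cell} (hp : p ∈ square a) (hd : d ∈ square a)
    (hne : d ≠ p) (hna : ¬ Adj p d) : d = oppCell a p := by
  obtain ⟨a1, a2⟩ := a; obtain ⟨p1, p2⟩ := p; obtain ⟨d1, d2⟩ := d
  simp only [square, Finset.mem_insert, Finset.mem_singleton, Prod.mk.injEq] at hp hd
  simp only [Adj, oppCell, ne_eq, Prod.mk.injEq] at *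
  omega

/-- two agents at `p` and `q` in an otherwise empty gridworld
(state `{p, q}`); the agent at `p` has an admissible dance on the 2×2 subgrid
`square a ∋ p` whose other three cells are empty, and the agent at `q` has an
admissible Move `q → q'`. Then the dance support and the move support
`{q, q'}` fail to be disjoint, while each Move within the dance admissible at
`p` has support disjoint from `{q, q'}`, if and only if `q'` is the cell of
the subgrid diagonally opposite `p`; and in that case `p` and `q` differ by a
knight move. -/
theorem dance_move_interference_iff_opposite (a p q q' : Cell)
    (hpq : p ≠ q) (hp : p ∈ square a)
    (hempty : ∀ d ∈ square a, d ≠ p → d ∉ ({p, q} : Finset Cell))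
    (hadj : Adj q q') (hq' : q' ∉ ({p, q} : Finset Cell)) :
    ((¬ Disjoint (square a) ({q, q'} : Finset Cell) ∧
        ∀ d ∈ square a, Adj p d →
          Disjoint ({p, d} : Finset Cell) ({q, q'} : Finset Cell)) ↔
      q' = oppCell a p) ∧
    (q' = oppCell a p → KnightRel p q) := by
  have hqD : q ∉ square a := by
    intro hq
    rcases eq_or_ne q p with h | h
    · exact hpq h.symm
    · exact hempty q hq h (by simp)
  have hq'p : q' ≠ p := by intro h; exact hq' (by simp [h])
  constructor
  · constructor
    · rintro ⟨h1, h2⟩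
      have hq'D : q' ∈ square a := by
        by_contra hc
        refine h1 (Finset.disjoint_right.mpr ?_)
        intro x hx
        rcases Finset.mem_insert.mp hx with h | h
        · exact h ▸ hqD
        · rw [Finset.mem_singleton] at h; exact h ▸ hc
      have hna : ¬ Adj p q' := by
        intro hadj'
        exact (Finset.disjoint_left.mp (h2 q' hq'D hadj')
          (show q' ∈ ({p, q'} : Finset Cell) by simp))
          (show q' ∈ ({q, q'} : Finset Cell) by simp)
      exact eq_opp hp hq'D hq'p hna
    · intro h
      refine ⟨fun hd => (Finset.disjoint_left.mp hd (h ▸ opp_mem hp)) (by simp), ?_⟩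
      intro d hd hadjd
      rw [Finset.disjoint_left]
      intro x hx hx'
      have hdq : d ≠ q := fun he => hqD (he ▸ hd)
      have hdq' : d ≠ q' := by
        intro he
        exact not_adj_opp hp (by rwa [← h, ← he])
      have hpq' : p ≠ q' := fun he => hq'p he.symm
      simp only [Finset.mem_insert, Finset.mem_singleton] at hx hx'
      rcases hx with rfl | rfl <;> rcases hx' with rfl | rfl
      · exact hpq rfl
      · exact hpq' rfl
      · exact hdq rfl
      · exact hdq' rfl
  · intro h
    clear hempty hq' hq'p hpq
    obtain ⟨a1, a2⟩ := a; obtain ⟨p1, p2⟩ := p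
    obtain ⟨q1, q2⟩ := q; obtain ⟨r1, r2⟩ := q'
    simp only [oppCell, Prod.mk.injEq] at h
    simp only [square, Finset.mem_insert, Finset.mem_singleton, Prod.mk.injEq, not_or]
      at hp hqD
    simp only [Adj] at hadj
    simp only [KnightRel]
    obtain ⟨h1, h2⟩ := h
    subst h1 h2
    obtain hp | hp | hp | hp := hp <;> [skip; skip; skip; skip] <;>
      (obtain ⟨e1, e2⟩ := hp; subst e1 e2; omega)
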